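/- Equality case in the data processing inequality via disintegration: Let μ and ν be probability measures on a standard Borel space Ω, f : Ω → E measurable into a standard Borel space E, and suppose μ ≪ ν. If the conditional distributions of μ and ν given f agree f_*μ-almost everywhere (i.e., μ and ν share a common disintegration kernel along f), then KL(f_*μ ‖ f_*ν) = KL(μ ‖ ν). -/

import Mathlib

open MeasureTheory
open scoped ENNReal NNReal

/- Kullback–Leibler divergence: `∫ log (dμ/dν) dμ` when `μ ≪ ν` (and the
log-likelihood ratio is integrable), `+∞` otherwise. -/
open scoped Classical in
noncomputable def klDiv {Ω : Type*} [MeasurableSpace Ω] (μ ν : Measure Ω) : ℝ≥0∞ :=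
  if μ ≪ ν ∧ Integrable (llr μ ν) μ then ENNReal.ofReal (∫ x, llr μ ν x ∂μ) else ⊤

/-- Equality case in the data processing inequality: if `μ ≪ ν` and `μ`, `ν` admit a
common disintegration kernel along `f` (`f_*μ`-a.e.), then
`KL(f_*μ ‖ f_*ν) = KL(μ ‖ ν)`. -/
theorem klDiv_map_eq_of_common_disintegration
    {Ω E : Type*} [MeasurableSpace Ω] [StandardBorelSpace Ω]
    [MeasurableSpace E] [StandardBorelSpace E]
    (μ ν : Measure Ω) [IsProbabilityMeasure μ] [IsProbabilityMeasure ν]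
    {f : Ω → E} (hf : Measurable f) (hμν : μ ≪ ν)
    (κμ κν : ProbabilityTheory.Kernel E Ω)
    [ProbabilityTheory.IsMarkovKernel κμ] [ProbabilityTheory.IsMarkovKernel κν]
    (hdisμ : μ = (μ.map f).bind κμ)
    (hdisν : ν = (ν.map f).bind κν)
    (hconcμ : ∀ᵐ e ∂(μ.map f), κμ e (f ⁻¹' {e})ᶜ = 0)
    (hconcν : ∀ᵐ e ∂(ν.map f), κν e (f ⁻¹' {e})ᶜ = 0)
    (hagree : ∀ᵐ e ∂(μ.map f), κμ e = κν e) :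
    klDiv (μ.map f) (ν.map f) = klDiv μ ν := by
  classical
  have hg : Measurable ((μ.map f).rnDeriv (ν.map f)) := Measure.measurable_rnDeriv _ _
  set g := (μ.map f).rnDeriv (ν.map f) with hgdef
  have hmap : μ.map f ≪ ν.map f := hμν.map hf
  -- key: μ = ν.withDensity (g ∘ f)
  have key : μ = ν.withDensity (fun ω => g (f ω)) := by
    ext s hs
    rw [withDensity_apply _ hs]
    calc μ s = ∫⁻ e, κμ e s ∂(μ.map f) := by
          conv_lhs => rw [hdisμ]
          rw [Measure.bind_apply hs κμ.measurable.aemeasurable]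
      _ = ∫⁻ e, κν e s ∂(μ.map f) := by
          refine lintegral_congr_ae ?_
          filter_upwards [hagree] with e he
          rw [he]
      _ = ∫⁻ e, g e * κν e s ∂(ν.map f) := by
          conv_lhs => rw [← Measure.withDensity_rnDeriv_eq _ _ hmap]
          rw [lintegral_withDensity_eq_lintegral_mul _ hg (κν.measurable_coe hs)]
          rfl
      _ = ∫⁻ e, ∫⁻ ω, s.indicator (fun ω => g (f ω)) ω ∂(κν e) ∂(ν.map f) := by
          refine lintegral_congr_ae ?_
          filter_upwards [hconcν] with e he
          have hae : ∀ᵐ ω ∂(κν e), f ω = e := by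
            have hset : (f ⁻¹' {e})ᶜ = {ω | ¬ f ω = e} := by ext ω; simp
            rw [ae_iff, ← hset]; exact he
          rw [lintegral_congr_ae (hae.mono fun ω hω => ?_), lintegral_indicator_const hs]
          by_cases hω' : ω ∈ s <;> simp [hω, hω']
      _ = ∫⁻ ω, s.indicator (fun ω => g (f ω)) ω ∂ν := by
          conv_rhs => rw [hdisν]
          exact (Measure.lintegral_bind κν.measurable.aemeasurable ((hg.comp hf).indicator hs).aemeasurable).symm
      _ = ∫⁻ ω in s, g (f ω) ∂ν := lintegral_indicator hs _
  have hrn : μ.rnDeriv ν =ᵐ[ν] fun ω => g (f ω) := by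
    conv_lhs => rw [key]
    exact Measure.rnDeriv_withDensity ν (hg.comp hf)
  have hllr : llr μ ν =ᵐ[μ] fun ω => llr (μ.map f) (ν.map f) (f ω) := by
    filter_upwards [hrn.filter_mono hμν.ae_le] with ω hω
    simp only [llr_def, hω, hgdef]
  have hint : Integrable (llr (μ.map f) (ν.map f)) (μ.map f) ↔ Integrable (llr μ ν) μ := by
    rw [integrable_map_measure (measurable_llr _ _).aestronglyMeasurable hf.aemeasurable]
    exact (integrable_congr (α := Ω) (μ := μ) (f := llr μ ν)
      (g := fun ω => llr (μ.map f) (ν.map f) (f ω)) hllr).symm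
  have hInt : ∫ e, llr (μ.map f) (ν.map f) e ∂(μ.map f) = ∫ ω, llr μ ν ω ∂μ := by
    rw [integral_map hf.aemeasurable (measurable_llr _ _).aestronglyMeasurable]
    exact (integral_congr_ae hllr).symm
  unfold klDiv
  by_cases h : Integrable (llr μ ν) μ
  · rw [if_pos ⟨hmap, hint.mpr h⟩, if_pos ⟨hμν, h⟩, hInt]
  · rw [if_neg (fun h' => h (hint.mp h'.2)), if_neg (fun h' => h h'.2)]
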